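/- arXiv:2301.11866 — 3 statements merged into one kernel-verified Lean document; each statement's English description precedes it below -/
import Mathlib

section
/- Let X and Y be nonempty Stone spaces (nonempty, compact, Hausdorff, totally disconnected topological spaces) and define the map ψ : LocallyConstant(X,ℝ) × LocallyConstant(Y,ℝ) → LocallyConstant(X×Y,ℝ) by ψ(f,g)(x,y) = f(x)·g(y). Then ψ is a Riesz bimorphism, and the pair (LocallyConstant(X×Y,ℝ), ψ) has the universal property of the Archimedean Riesz space tensor product: for every Archimedean Riesz space H and every Riesz bimorphism φ : LocallyConstant(X,ℝ) × LocallyConstant(Y,ℝ) → H there exists a unique Riesz homomorphism T : LocallyConstant(X×Y,ℝ) → H such that T ∘ ψ = φ. (This realizes the paper's main theorem: the Carathéodory space of place functions on the free product A ⊗ B of two Boolean algebras is Riesz isomorphic to the Fremlin–Archimedean Riesz space tensor product C(A) ⊗̄ C(B).) -/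
open TopologicalSpace

universe u

noncomputable instance {X : Type*} [TopologicalSpace X] : Max (LocallyConstant X ℝ) :=
  ⟨fun f g => ⟨fun x => max (f x) (g x), f.isLocallyConstant.comp₂ g.isLocallyConstant max⟩⟩

noncomputable instance {X : Type*} [TopologicalSpace X] : Min (LocallyConstant X ℝ) :=
  ⟨fun f g => ⟨fun x => min (f x) (g x), f.isLocallyConstant.comp₂ g.isLocallyConstant min⟩⟩

instance {X : Type*} [TopologicalSpace X] : LE (LocallyConstant X ℝ) :=
  ⟨fun f g => (f : X → ℝ) ≤ (g : X → ℝ)⟩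

instance {X : Type*} [TopologicalSpace X] : LT (LocallyConstant X ℝ) :=
  ⟨fun f g => (f : X → ℝ) < (g : X → ℝ)⟩

/-- The pointwise lattice structure on locally constant real functions. -/
noncomputable instance {X : Type*} [TopologicalSpace X] : Lattice (LocallyConstant X ℝ) :=
  Function.Injective.lattice (fun f : LocallyConstant X ℝ => (f : X → ℝ)) DFunLike.coe_injective
    Iff.rfl Iff.rfl (fun _ _ => rfl) (fun _ _ => rfl)

/-- `ψ(f,g)(x,y) = f(x) * g(y)`. -/
noncomputable def psi {X Y : Type*} [TopologicalSpace X] [TopologicalSpace Y]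
    (f : LocallyConstant X ℝ) (g : LocallyConstant Y ℝ) : LocallyConstant (X × Y) ℝ :=
  ⟨fun p => f p.1 * g p.2,
    (f.isLocallyConstant.comp_continuous continuous_fst).mul
      (g.isLocallyConstant.comp_continuous continuous_snd)⟩

namespace RieszAux

/-! ### Lattice-ordered group lemmas -/

section HLemmas
variable {H : Type*} [AddCommGroup H] [Lattice H] [CovariantClass H H (· + ·) (· ≤ ·)]

lemma key_inf_add {x y z : H} (hx : 0 ≤ x) (hy : 0 ≤ y) (hz : 0 ≤ z) :
    (x + y) ⊓ z ≤ x ⊓ z + y ⊓ z := by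
  rw [← sub_le_iff_le_add', sub_inf x z ((x + y) ⊓ z)]
  apply sup_le
  · exact le_inf (sub_le_iff_le_add.2 (inf_le_left.trans (by rw [add_comm])))
      (sub_le_iff_le_add.2 (inf_le_right.trans (le_add_of_nonneg_right hx)))
  · exact le_inf ((sub_nonpos.2 inf_le_right).trans hy) ((sub_nonpos.2 inf_le_right).trans hz)

lemma nsmul_inf_eq_zero {x z : H} (hx : 0 ≤ x) (hz : 0 ≤ z) (hxz : x ⊓ z = 0) (n : ℕ) :
    (n • x) ⊓ z = 0 := by
  induction n with
  | zero => simpa using inf_eq_left.mpr hz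
  | succ n ih =>
    refine le_antisymm ?_ (le_inf (nsmul_nonneg hx _) hz)
    calc ((n + 1) • x) ⊓ z = (n • x + x) ⊓ z := by rw [succ_nsmul]
      _ ≤ (n • x) ⊓ z + x ⊓ z := key_inf_add (nsmul_nonneg hx n) hx hz
      _ = 0 := by rw [ih, hxz, add_zero]

lemma rsmul_inf_eq_zero [Module ℝ H] [PosSMulMono ℝ H] {x z : H} (hx : 0 ≤ x) (hz : 0 ≤ z)
    (hxz : x ⊓ z = 0) {c : ℝ} (hc : 0 ≤ c) : (c • x) ⊓ z = 0 := by
  refine le_antisymm ?_ (le_inf (smul_nonneg hc hx) hz)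
  have hle : c • x ≤ (⌈c⌉₊ : ℝ) • x := by
    rw [← sub_nonneg, ← sub_smul]
    exact smul_nonneg (by simpa [sub_nonneg] using Nat.le_ceil c) hx
  calc (c • x) ⊓ z ≤ ((⌈c⌉₊ : ℝ) • x) ⊓ z := inf_le_inf_right z hle
    _ = (⌈c⌉₊ • x) ⊓ z := by rw [Nat.cast_smul_eq_nsmul]
    _ = 0 := nsmul_inf_eq_zero hx hz hxz _

lemma my_sum_nonneg {ι : Type*} {s : Finset ι} {x : ι → H} (hx : ∀ k ∈ s, 0 ≤ x k) :
    0 ≤ ∑ k ∈ s, x k := by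
  classical
  induction s using Finset.induction_on with
  | empty => simp
  | @insert a s' hk ih =>
    rw [Finset.sum_insert hk]
    exact add_nonneg (hx a (Finset.mem_insert_self a s'))
      (ih fun k hks => hx k (Finset.mem_insert_of_mem hks))

lemma sum_inf_eq_zero {ι : Type*} {s : Finset ι} {x : ι → H} {z : H} (hz : 0 ≤ z)
    (hx : ∀ k ∈ s, 0 ≤ x k) (hxz : ∀ k ∈ s, x k ⊓ z = 0) : (∑ k ∈ s, x k) ⊓ z = 0 := by
  classical
  induction s using Finset.induction_on with
  | empty => simpa using inf_eq_left.mpr hz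
  | @insert a s' hk ih =>
    rw [Finset.sum_insert hk]
    refine le_antisymm ?_ (le_inf (add_nonneg (hx a (Finset.mem_insert_self a s'))
      (my_sum_nonneg fun k hks => hx k (Finset.mem_insert_of_mem hks))) hz)
    calc (x a + ∑ k ∈ s', x k) ⊓ z ≤ x a ⊓ z + (∑ k ∈ s', x k) ⊓ z :=
        key_inf_add (hx a (Finset.mem_insert_self a s'))
          (my_sum_nonneg fun k hks => hx k (Finset.mem_insert_of_mem hks)) hz
      _ = 0 := by
        rw [hxz a (Finset.mem_insert_self a s'),
          ih (fun k hks => hx k (Finset.mem_insert_of_mem hks))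
            (fun k hks => hxz k (Finset.mem_insert_of_mem hks)), add_zero]

lemma posPart_of_disj {P N : H} (hPN : P ⊓ N = 0) : (P - N) ⊔ 0 = P := by
  have h2 : P ⊔ N = P + N := by rw [← inf_add_sup P N, hPN, zero_add]
  calc (P - N) ⊔ 0 = (P - N) ⊔ (N - N) := by rw [sub_self]
    _ = (P ⊔ N) - N := (sup_sub P N N).symm
    _ = P := by rw [h2, add_sub_cancel_right]

lemma posPart_le_abs' (a : H) : a⁺ ≤ |a| := sup_le (le_abs_self a) (abs_nonneg a)
lemma negPart_le_abs' (a : H) : a⁻ ≤ |a| := sup_le (neg_le_abs a) (abs_nonneg a)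

lemma sum_sup_zero {ι : Type*} (s : Finset ι) (a : ι → H)
    (hdis : ∀ k ∈ s, ∀ l ∈ s, k ≠ l → |a k| ⊓ |a l| = 0) :
    (∑ k ∈ s, a k) ⊔ 0 = ∑ k ∈ s, (a k ⊔ 0) := by
  classical
  have hsum : ∑ k ∈ s, a k = (∑ k ∈ s, (a k)⁺) - ∑ k ∈ s, (a k)⁻ := by
    rw [← Finset.sum_sub_distrib]
    exact Finset.sum_congr rfl fun k _ => (posPart_sub_negPart (a k)).symm
  have hcross : ∀ k ∈ s, ∀ l ∈ s, (a k)⁺ ⊓ (a l)⁻ = 0 := by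
    intro k hk l hl
    rcases eq_or_ne k l with rfl | hne
    · exact posPart_inf_negPart_eq_zero (a k)
    · refine le_antisymm ?_ (le_inf (posPart_nonneg _) (negPart_nonneg _))
      exact (inf_le_inf (posPart_le_abs' _) (negPart_le_abs' _)).trans
        (hdis k hk l hl hne).le
  have hPN : (∑ k ∈ s, (a k)⁺) ⊓ (∑ l ∈ s, (a l)⁻) = 0 := by
    refine sum_inf_eq_zero (my_sum_nonneg fun l hl => negPart_nonneg _)
      (fun k hk => posPart_nonneg _) (fun k hk => ?_)
    refine le_antisymm ?_ (le_inf (posPart_nonneg _)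
      (my_sum_nonneg fun l hl => negPart_nonneg _))
    rw [inf_comm]
    exact (sum_inf_eq_zero (posPart_nonneg _) (fun l hl => negPart_nonneg _)
      (fun l hl => by rw [inf_comm]; exact hcross k hk l hl)).le
  calc (∑ k ∈ s, a k) ⊔ 0 = ((∑ k ∈ s, (a k)⁺) - ∑ k ∈ s, (a k)⁻) ⊔ 0 := by rw [hsum]
    _ = ∑ k ∈ s, (a k)⁺ := posPart_of_disj hPN
    _ = ∑ k ∈ s, (a k ⊔ 0) := rfl

end HLemmas

/-! ### psi is bilinear -/

section Psi
variable {X Y : Type*} [TopologicalSpace X] [TopologicalSpace Y]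

lemma psi_add_left (f₁ f₂ : LocallyConstant X ℝ) (g : LocallyConstant Y ℝ) :
    psi (f₁ + f₂) g = psi f₁ g + psi f₂ g :=
  LocallyConstant.ext fun _ => add_mul _ _ _

lemma psi_smul_left (c : ℝ) (f : LocallyConstant X ℝ) (g : LocallyConstant Y ℝ) :
    psi (c • f) g = c • psi f g :=
  LocallyConstant.ext fun _ => mul_assoc _ _ _

lemma psi_add_right (f : LocallyConstant X ℝ) (g₁ g₂ : LocallyConstant Y ℝ) :
    psi f (g₁ + g₂) = psi f g₁ + psi f g₂ :=
  LocallyConstant.ext fun _ => mul_add _ _ _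

lemma psi_smul_right (c : ℝ) (f : LocallyConstant X ℝ) (g : LocallyConstant Y ℝ) :
    psi f (c • g) = c • psi f g :=
  LocallyConstant.ext fun _ => mul_left_comm _ _ _

noncomputable def psiLM :
    LocallyConstant X ℝ →ₗ[ℝ] LocallyConstant Y ℝ →ₗ[ℝ] LocallyConstant (X × Y) ℝ :=
  LinearMap.mk₂ ℝ psi psi_add_left psi_smul_left psi_add_right psi_smul_right

noncomputable def mmap :
    TensorProduct ℝ (LocallyConstant X ℝ) (LocallyConstant Y ℝ) →ₗ[ℝ]
      LocallyConstant (X × Y) ℝ :=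
  TensorProduct.lift psiLM

@[simp] lemma mmap_tmul (f : LocallyConstant X ℝ) (g : LocallyConstant Y ℝ) :
    mmap (f ⊗ₜ[ℝ] g) = psi f g := rfl

/-- evaluation as a linear map. -/
noncomputable def evalLM {Z : Type*} [TopologicalSpace Z] (z : Z) :
    LocallyConstant Z ℝ →ₗ[ℝ] ℝ where
  toFun f := f z
  map_add' _ _ := rfl
  map_smul' _ _ := rfl

/-- partial evaluation in the first variable, as a linear map. -/
noncomputable def pevalLM (x : X) :
    LocallyConstant (X × Y) ℝ →ₗ[ℝ] LocallyConstant Y ℝ where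
  toFun f := ⟨fun y => f (x, y), f.isLocallyConstant.comp_continuous (Continuous.prodMk_right x)⟩
  map_add' _ _ := rfl
  map_smul' _ _ := rfl

lemma pevalLM_psi (x : X) (f : LocallyConstant X ℝ) (g : LocallyConstant Y ℝ) :
    pevalLM x (psi f g) = f x • g :=
  LocallyConstant.ext fun _ => rfl

lemma linIndep_psi {ι κ : Type*} {b : ι → LocallyConstant X ℝ} {c : κ → LocallyConstant Y ℝ}
    (hb : LinearIndependent ℝ b) (hc : LinearIndependent ℝ c) :
    LinearIndependent ℝ (fun p : ι × κ => psi (b p.1) (c p.2)) := by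
  classical
  rw [linearIndependent_iff']
  intro s g H0 p hp
  set s₁ : Finset ι := s.image Prod.fst with hs₁
  set s₂ : Finset κ := s.image Prod.snd with hs₂
  set g' : ι × κ → ℝ := fun q => if q ∈ s then g q else 0 with hg'
  have hsub : s ⊆ s₁ ×ˢ s₂ := fun q hq =>
    Finset.mem_product.2 ⟨Finset.mem_image_of_mem _ hq, Finset.mem_image_of_mem _ hq⟩
  have H1 : ∑ q ∈ s₁ ×ˢ s₂, g' q • psi (b q.1) (c q.2) = 0 := by
    rw [← H0]
    refine (Finset.sum_subset hsub fun q _ hq => by simp [hg', hq]).symm.trans ?_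
    exact Finset.sum_congr rfl fun q hq => by simp [hg', hq]
  have H2 : ∀ x : X, ∀ j ∈ s₂, (∑ i ∈ s₁, g' (i, j) * b i x) = 0 := by
    intro x
    have H1x : ∑ j ∈ s₂, (∑ i ∈ s₁, g' (i, j) * b i x) • c j = 0 := by
      have := congrArg (pevalLM x) H1
      rw [map_sum, map_zero] at this
      simp_rw [map_smul, pevalLM_psi, smul_smul] at this
      rw [Finset.sum_product] at this
      rw [Finset.sum_comm] at this
      simpa [Finset.sum_smul] using this
    exact linearIndependent_iff'.1 hc s₂ _ H1x
  have H3 : ∀ j ∈ s₂, ∀ i ∈ s₁, g' (i, j) = 0 := by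
    intro j hj
    refine linearIndependent_iff'.1 hb s₁ (fun i => g' (i, j)) ?_
    refine LocallyConstant.ext fun x => ?_
    have := H2 x j hj
    have hcoe : (∑ i ∈ s₁, g' (i, j) • b i) x = ∑ i ∈ s₁, g' (i, j) * b i x :=
      map_sum (evalLM x) (fun i => g' (i, j) • b i) s₁
    show (∑ i ∈ s₁, g' (i, j) • b i) x = (0 : LocallyConstant X ℝ) x
    rw [hcoe]
    simpa using this
  have := H3 p.2 (Finset.mem_image_of_mem _ hp) p.1 (Finset.mem_image_of_mem _ hp)
  simpa [hg', hp] using this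

lemma mmap_injective : Function.Injective
    (mmap : TensorProduct ℝ (LocallyConstant X ℝ) (LocallyConstant Y ℝ) →ₗ[ℝ] _) := by
  classical
  set b := Module.Basis.ofVectorSpace ℝ (LocallyConstant X ℝ)
  set c := Module.Basis.ofVectorSpace ℝ (LocallyConstant Y ℝ)
  set bc := Module.Basis.tensorProduct b c
  have hli := linIndep_psi b.linearIndependent c.linearIndependent
  intro t₁ t₂ hteq
  have key : ∀ t : TensorProduct ℝ (LocallyConstant X ℝ) (LocallyConstant Y ℝ),
      mmap t = 0 → t = 0 := by
    intro t ht
    have hrepr : mmap t = Finsupp.linearCombination ℝ (fun p => psi (b p.1) (c p.2))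
        (bc.repr t) := by
      conv_lhs => rw [← Module.Basis.linearCombination_repr bc t]
      rw [Finsupp.apply_linearCombination]
      have hfun : (⇑mmap ∘ ⇑bc) = (fun p => psi (b p.1) (c p.2)) := by
        funext p
        obtain ⟨i, j⟩ := p
        show mmap (bc (i, j)) = _
        rw [Module.Basis.tensorProduct_apply, mmap_tmul]
      rw [hfun]
    have hz : bc.repr t = 0 := linearIndependent_iff.1 hli _ (by rw [← hrepr]; exact ht)
    have := congrArg bc.repr.symm hz
    simpa using this
  have := key (t₁ - t₂) (by rw [map_sub, hteq, sub_self])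
  exact sub_eq_zero.1 this

end Psi

/-! ### Slice representation -/

section Rep
variable {X Y : Type*} [TopologicalSpace X] [TopologicalSpace Y]

/-- currying a locally constant function on a product, assuming `Y` compact. -/
noncomputable def lcCurry [CompactSpace Y] (h : LocallyConstant (X × Y) ℝ) :
    LocallyConstant X (LocallyConstant Y ℝ) where
  toFun x := ⟨fun y => h (x, y), h.isLocallyConstant.comp_continuous (Continuous.prodMk_right x)⟩
  isLocallyConstant := by
    rw [IsLocallyConstant.iff_exists_open]
    intro x
    have key : ∀ y : Y, ∃ (A : Set X) (B : Set Y), IsOpen A ∧ IsOpen B ∧ x ∈ A ∧ y ∈ B ∧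
        ∀ x' ∈ A, ∀ y' ∈ B, h (x', y') = h (x, y) := by
      intro y
      have hop := h.isLocallyConstant.isOpen_fiber (h (x, y))
      rcases isOpen_prod_iff.1 hop x y rfl with ⟨A, B, hA, hB, hxA, hyB, hsub⟩
      exact ⟨A, B, hA, hB, hxA, hyB, fun x' hx' y' hy' => hsub (Set.mk_mem_prod hx' hy')⟩
    choose A B hA hB hxA hyB hval using key
    obtain ⟨t, ht⟩ := isCompact_univ.elim_finite_subcover B hB
      (fun y _ => Set.mem_iUnion.2 ⟨y, hyB y⟩)
    refine ⟨⋂ y ∈ t, A y, isOpen_biInter_finset (fun y _ => hA y),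
      Set.mem_iInter₂.2 (fun y _ => hxA y), ?_⟩
    intro x' hx'
    refine LocallyConstant.ext fun y => ?_
    obtain ⟨y₀, hy₀t, hy₀⟩ : ∃ y₀ ∈ t, y ∈ B y₀ := by
      simpa using ht (Set.mem_univ y)
    exact (hval y₀ x' (Set.mem_iInter₂.1 hx' y₀ hy₀t) y hy₀).trans
      (hval y₀ x (hxA y₀) y hy₀).symm

@[simp] lemma lcCurry_apply [CompactSpace Y] (h : LocallyConstant (X × Y) ℝ) (x : X) (y : Y) :
    lcCurry h x y = h (x, y) := rfl

variable [CompactSpace X] [CompactSpace Y]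

/-- the finitely many "slices" of `h`. -/
noncomputable def pieces (h : LocallyConstant (X × Y) ℝ) : Finset (LocallyConstant Y ℝ) :=
  (lcCurry h).range_finite.toFinset

lemma curry_mem_pieces (h : LocallyConstant (X × Y) ℝ) (x : X) : lcCurry h x ∈ pieces h := by
  simp [pieces, Set.Finite.mem_toFinset]

lemma isClopen_fiber' (h : LocallyConstant (X × Y) ℝ) (k : LocallyConstant Y ℝ) :
    IsClopen {x | lcCurry h x = k} :=
  (lcCurry h).isLocallyConstant.isClopen_fiber k

/-- indicator of a slice fiber. -/
noncomputable def chi (h : LocallyConstant (X × Y) ℝ) (k : LocallyConstant Y ℝ) :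
    LocallyConstant X ℝ :=
  LocallyConstant.charFn ℝ (isClopen_fiber' h k)

lemma chi_apply_eq_one (h : LocallyConstant (X × Y) ℝ) {k : LocallyConstant Y ℝ} {x : X}
    (hx : lcCurry h x = k) : chi h k x = 1 := by
  rw [chi, LocallyConstant.charFn_eq_one]; exact hx

lemma chi_apply_eq_zero (h : LocallyConstant (X × Y) ℝ) {k : LocallyConstant Y ℝ} {x : X}
    (hx : lcCurry h x ≠ k) : chi h k x = 0 := by
  rw [chi, LocallyConstant.charFn_eq_zero]; exact hx

lemma chi_nonneg (h : LocallyConstant (X × Y) ℝ) (k : LocallyConstant Y ℝ) :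
    0 ≤ chi h k := by
  intro x
  show (0 : ℝ) ≤ chi h k x
  rcases eq_or_ne (lcCurry h x) k with hk | hk
  · rw [chi_apply_eq_one h hk]; norm_num
  · rw [chi_apply_eq_zero h hk]

lemma chi_inf_eq_zero (h : LocallyConstant (X × Y) ℝ) {k l : LocallyConstant Y ℝ}
    (hkl : k ≠ l) : chi h k ⊓ chi h l = 0 := by
  refine LocallyConstant.ext fun x => ?_
  show min (chi h k x) (chi h l x) = 0
  rcases eq_or_ne (lcCurry h x) l with hl | hl
  · have hk : lcCurry h x ≠ k := fun hc => hkl (hc.symm.trans hl)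
    rw [chi_apply_eq_zero h hk]
    simp
    exact chi_nonneg h l x
  · rw [chi_apply_eq_zero h hl]
    simp
    exact chi_nonneg h k x

lemma rep_general (h : LocallyConstant (X × Y) ℝ) (w : LocallyConstant (X × Y) ℝ)
    (v : LocallyConstant Y ℝ → LocallyConstant Y ℝ)
    (hw : ∀ x y, w (x, y) = v (lcCurry h x) y) :
    w = ∑ k ∈ pieces h, psi (chi h k) (v k) := by
  refine LocallyConstant.ext fun p => ?_
  obtain ⟨x, y⟩ := p
  have hs : (∑ k ∈ pieces h, psi (chi h k) (v k)) (x, y)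
      = ∑ k ∈ pieces h, (chi h k x * v k y) :=
    map_sum (evalLM (x, y)) (fun k => psi (chi h k) (v k)) (pieces h)
  rw [hs, hw x y]
  rw [Finset.sum_eq_single_of_mem (lcCurry h x) (curry_mem_pieces h x)
    (fun k hk hne => by rw [chi_apply_eq_zero h (fun hc => hne hc.symm), zero_mul])]
  rw [chi_apply_eq_one h rfl, one_mul]

lemma rep (h : LocallyConstant (X × Y) ℝ) :
    h = ∑ k ∈ pieces h, psi (chi h k) k :=
  rep_general h h (fun k => k) (fun _ _ => rfl)

lemma mmap_surjective :
    Function.Surjective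
      (mmap : TensorProduct ℝ (LocallyConstant X ℝ) (LocallyConstant Y ℝ) →ₗ[ℝ] _) := by
  intro h
  refine ⟨∑ k ∈ pieces h, chi h k ⊗ₜ[ℝ] k, ?_⟩
  rw [map_sum]
  simp only [mmap_tmul]
  exact (rep h).symm

end Rep

end RieszAux

open RieszAux

theorem stmt0 {X Y : Type*}
    [TopologicalSpace X] [CompactSpace X] [T2Space X] [TotallyDisconnectedSpace X] [Nonempty X]
    [TopologicalSpace Y] [CompactSpace Y] [T2Space Y] [TotallyDisconnectedSpace Y] [Nonempty Y] :
    -- ψ is a Riesz bimorphism: it is bilinear ...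
    ((∀ (f₁ f₂ : LocallyConstant X ℝ) (g : LocallyConstant Y ℝ),
        psi (f₁ + f₂) g = psi f₁ g + psi f₂ g) ∧
      (∀ (c : ℝ) (f : LocallyConstant X ℝ) (g : LocallyConstant Y ℝ),
        psi (c • f) g = c • psi f g) ∧
      (∀ (f : LocallyConstant X ℝ) (g₁ g₂ : LocallyConstant Y ℝ),
        psi f (g₁ + g₂) = psi f g₁ + psi f g₂) ∧
      (∀ (c : ℝ) (f : LocallyConstant X ℝ) (g : LocallyConstant Y ℝ),
        psi f (c • g) = c • psi f g)) ∧
    -- ... and a lattice homomorphism in each variable against a positive element in the other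
    (∀ (g : LocallyConstant Y ℝ), 0 ≤ g → ∀ (f₁ f₂ : LocallyConstant X ℝ),
        psi (f₁ ⊔ f₂) g = psi f₁ g ⊔ psi f₂ g) ∧
    (∀ (f : LocallyConstant X ℝ), 0 ≤ f → ∀ (g₁ g₂ : LocallyConstant Y ℝ),
        psi f (g₁ ⊔ g₂) = psi f g₁ ⊔ psi f g₂) ∧
    -- universal property: for every Archimedean Riesz space `H` and every Riesz
    -- bimorphism `φ`, there is a unique Riesz homomorphism `T` with `T ∘ ψ = φ`.
    (∀ (H : Type u) [AddCommGroup H] [Lattice H] [Module ℝ H]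
        [CovariantClass H H (· + ·) (· ≤ ·)] [PosSMulMono ℝ H],
      (∀ x y : H, 0 ≤ x → 0 ≤ y → (∀ n : ℕ, n • y ≤ x) → y = 0) →
      ∀ (φ : LocallyConstant X ℝ → LocallyConstant Y ℝ → H),
        (∀ f₁ f₂ g, φ (f₁ + f₂) g = φ f₁ g + φ f₂ g) →
        (∀ (c : ℝ) f g, φ (c • f) g = c • φ f g) →
        (∀ f g₁ g₂, φ f (g₁ + g₂) = φ f g₁ + φ f g₂) →
        (∀ (c : ℝ) f g, φ f (c • g) = c • φ f g) →
        (∀ g, 0 ≤ g → ∀ f₁ f₂, φ (f₁ ⊔ f₂) g = φ f₁ g ⊔ φ f₂ g) →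
        (∀ f, 0 ≤ f → ∀ g₁ g₂, φ f (g₁ ⊔ g₂) = φ f g₁ ⊔ φ f g₂) →
        ∃! T : LocallyConstant (X × Y) ℝ →ₗ[ℝ] H,
          (∀ a b, T (a ⊔ b) = T a ⊔ T b) ∧ ∀ f g, T (psi f g) = φ f g) := by
  classical
  refine ⟨⟨psi_add_left, psi_smul_left, psi_add_right, psi_smul_right⟩, ?_, ?_, ?_⟩
  · intro g hg f₁ f₂
    refine LocallyConstant.ext fun p => ?_
    show max (f₁ p.1) (f₂ p.1) * g p.2 = max (f₁ p.1 * g p.2) (f₂ p.1 * g p.2)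
    exact max_mul_of_nonneg _ _ (hg p.2)
  · intro f hf g₁ g₂
    refine LocallyConstant.ext fun p => ?_
    show f p.1 * max (g₁ p.2) (g₂ p.2) = max (f p.1 * g₁ p.2) (f p.1 * g₂ p.2)
    exact mul_max_of_nonneg _ _ (hf p.1)
  intro H _ _ _ _ _ _harch φ hadd1 hsmul1 hadd2 hsmul2 hsup1 hsup2
  -- basic consequences of bilinearity
  have hφzero2 : ∀ f, φ f 0 = 0 := fun f => by simpa using hsmul2 0 f 0
  have hφzero1 : ∀ g, φ 0 g = 0 := fun g => by simpa using hsmul1 0 0 g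
  have hφneg2 : ∀ f g, φ f (-g) = -φ f g := fun f g => by
    have := hsmul2 (-1) f g
    rwa [neg_one_smul, neg_one_smul] at this
  have hφneg1 : ∀ f g, φ (-f) g = -φ f g := fun f g => by
    have := hsmul1 (-1) f g
    rwa [neg_one_smul, neg_one_smul] at this
  have hφsub1 : ∀ f₁ f₂ g, φ (f₁ - f₂) g = φ f₁ g - φ f₂ g := fun f₁ f₂ g => by
    rw [sub_eq_add_neg, hadd1, hφneg1, ← sub_eq_add_neg]
  have h1nnY : (0 : LocallyConstant Y ℝ) ≤ 1 := fun y => zero_le_one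
  have hφnn : ∀ f g, 0 ≤ f → 0 ≤ g → 0 ≤ φ f g := by
    intro f g hf hg
    have h := hsup2 f hf g 0
    rw [sup_eq_left.2 hg, hφzero2 f] at h
    rw [h]; exact le_sup_right
  have hφmono2 : ∀ f, 0 ≤ f → ∀ g g', g ≤ g' → φ f g ≤ φ f g' := by
    intro f hf g g' hgg
    have h := hsup2 f hf g g'
    rw [sup_eq_right.2 hgg] at h
    rw [h]; exact le_sup_left
  have hφinf1 : ∀ u v : LocallyConstant X ℝ, φ (u ⊓ v) 1 = φ u 1 ⊓ φ v 1 := by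
    intro u v
    have hid : u ⊓ v = u + v - (u ⊔ v) :=
      LocallyConstant.ext fun x => eq_sub_of_add_eq (min_add_max _ _)
    rw [hid, hφsub1, hadd1, hsup1 1 h1nnY]
    exact (eq_sub_of_add_eq (inf_add_sup _ _)).symm
  -- build `T`
  let φLM : LocallyConstant X ℝ →ₗ[ℝ] LocallyConstant Y ℝ →ₗ[ℝ] H :=
    LinearMap.mk₂ ℝ φ hadd1 hsmul1 hadd2 hsmul2
  let e : TensorProduct ℝ (LocallyConstant X ℝ) (LocallyConstant Y ℝ) ≃ₗ[ℝ]
      LocallyConstant (X × Y) ℝ :=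
    LinearEquiv.ofBijective mmap ⟨mmap_injective, mmap_surjective⟩
  let T : LocallyConstant (X × Y) ℝ →ₗ[ℝ] H :=
    (TensorProduct.lift φLM).comp e.symm.toLinearMap
  have hTpsi : ∀ f g, T (psi f g) = φ f g := by
    intro f g
    have he : e.symm (psi f g) = f ⊗ₜ[ℝ] g := by
      apply e.injective
      rw [LinearEquiv.apply_symm_apply]
      rfl
    show TensorProduct.lift φLM (e.symm (psi f g)) = φ f g
    rw [he]
    rfl
  have hTval : ∀ h : LocallyConstant (X × Y) ℝ, T h = ∑ k ∈ pieces h, φ (chi h k) k := by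
    intro h
    conv_lhs => rw [rep h]
    rw [map_sum]
    exact Finset.sum_congr rfl fun k _ => hTpsi _ _
  have hT0 : ∀ h : LocallyConstant (X × Y) ℝ, T (h ⊔ 0) = T h ⊔ 0 := by
    intro h
    have hrep2 : h ⊔ 0 = ∑ k ∈ pieces h, psi (chi h k) (k ⊔ 0) :=
      rep_general h (h ⊔ 0) (fun k => k ⊔ 0) (fun x y => rfl)
    have habs : ∀ k' : LocallyConstant Y ℝ, |φ (chi h k') k'| = φ (chi h k') (k' ⊔ -k') := by
      intro k'
      rw [hsup2 _ (chi_nonneg h k') k' (-k'), hφneg2]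
      rfl
    have hbound : ∀ k' : LocallyConstant Y ℝ, ∃ C : ℝ, 0 ≤ C ∧ k' ⊔ -k' ≤ C • 1 := by
      intro k'
      obtain ⟨C, hC⟩ := isCompact_univ.exists_bound_of_continuousOn
        k'.continuous.continuousOn
      refine ⟨max C 0, le_max_right _ _, fun y => ?_⟩
      show max (k' y) (-(k' y)) ≤ max C 0 * 1
      rw [mul_one]
      have hCy : |k' y| ≤ C := by simpa [Real.norm_eq_abs] using hC y (Set.mem_univ y)
      exact max_le ((le_abs_self _).trans (hCy.trans (le_max_left _ _)))
        ((neg_le_abs _).trans (hCy.trans (le_max_left _ _)))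
    have hdisj : ∀ k ∈ pieces h, ∀ l ∈ pieces h, k ≠ l →
        |φ (chi h k) k| ⊓ |φ (chi h l) l| = 0 := by
      intro k hk l hl hkl
      have hbase : φ (chi h k) 1 ⊓ φ (chi h l) 1 = 0 := by
        rw [← hφinf1, chi_inf_eq_zero h hkl, hφzero1]
      obtain ⟨Ck, hCk, hCkle⟩ := hbound k
      obtain ⟨Cl, hCl, hClle⟩ := hbound l
      have hb : 0 ≤ φ (chi h k) 1 := hφnn _ _ (chi_nonneg h k) h1nnY
      have hb' : 0 ≤ φ (chi h l) 1 := hφnn _ _ (chi_nonneg h l) h1nnY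
      have h1 : (Ck • φ (chi h k) 1) ⊓ (φ (chi h l) 1) = 0 :=
        rsmul_inf_eq_zero hb hb' hbase hCk
      have h2 : (Cl • φ (chi h l) 1) ⊓ (Ck • φ (chi h k) 1) = 0 :=
        rsmul_inf_eq_zero hb' (smul_nonneg hCk hb) (by rw [inf_comm]; exact h1) hCl
      refine le_antisymm ?_ (le_inf (abs_nonneg _) (abs_nonneg _))
      calc |φ (chi h k) k| ⊓ |φ (chi h l) l|
          ≤ (Ck • φ (chi h k) 1) ⊓ (Cl • φ (chi h l) 1) := by
            refine inf_le_inf ?_ ?_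
            · rw [habs k]
              calc φ (chi h k) (k ⊔ -k) ≤ φ (chi h k) (Ck • 1) :=
                    hφmono2 _ (chi_nonneg h k) _ _ hCkle
                _ = Ck • φ (chi h k) 1 := hsmul2 _ _ _
            · rw [habs l]
              calc φ (chi h l) (l ⊔ -l) ≤ φ (chi h l) (Cl • 1) :=
                    hφmono2 _ (chi_nonneg h l) _ _ hClle
                _ = Cl • φ (chi h l) 1 := hsmul2 _ _ _
        _ = 0 := by rw [inf_comm]; exact h2
    calc T (h ⊔ 0) = ∑ k ∈ pieces h, φ (chi h k) (k ⊔ 0) := by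
          rw [hrep2, map_sum]
          exact Finset.sum_congr rfl fun k _ => hTpsi _ _
      _ = ∑ k ∈ pieces h, (φ (chi h k) k ⊔ 0) := by
          refine Finset.sum_congr rfl fun k _ => ?_
          rw [hsup2 _ (chi_nonneg h k) k 0, hφzero2]
      _ = (∑ k ∈ pieces h, φ (chi h k) k) ⊔ 0 := (sum_sup_zero _ _ hdisj).symm
      _ = T h ⊔ 0 := by rw [hTval h]
  have hTsup : ∀ a b : LocallyConstant (X × Y) ℝ, T (a ⊔ b) = T a ⊔ T b := by
    intro a b
    have hab : a ⊔ b = a + ((b - a) ⊔ 0) := by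
      refine LocallyConstant.ext fun p => ?_
      show max (a p) (b p) = a p + max (b p - a p) 0
      rcases le_total (a p) (b p) with hle | hle
      · rw [max_eq_right hle, max_eq_left (sub_nonneg.2 hle), add_sub_cancel]
      · rw [max_eq_left hle, max_eq_right (sub_nonpos.2 hle), add_zero]
    rw [hab, map_add, hT0, map_sub, add_sup, add_zero, add_sub_cancel, sup_comm]
  refine ⟨T, ⟨hTsup, hTpsi⟩, ?_⟩
  rintro T' ⟨hT'sup, hT'psi⟩
  apply LinearMap.ext
  intro h
  have hval' : T' h = ∑ k ∈ pieces h, φ (chi h k) k := by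
    conv_lhs => rw [rep h]
    rw [map_sum]
    exact Finset.sum_congr rfl fun k _ => hT'psi _ _
  rw [hval', ← hTval h]
end

section
/- Let X and Y be nonempty Stone spaces. Then the Boolean algebra Clopens(X×Y) of clopen subsets of the product space X×Y is complete (every subset has a supremum in Clopens(X×Y)) if and only if either [Clopens(X) is finite and Clopens(Y) is complete] or [Clopens(Y) is finite and Clopens(X) is complete]. (This resolves Fremlin's problem 315Y(f): for nontrivial Boolean algebras A and B, the free product A ⊗ B is complete if and only if one of A, B is finite and the other is complete.) -/
open TopologicalSpace Set Filter Topology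

section Retract

/-- Completeness (existence of all LUBs) transfers along a monotone retraction. -/
lemma lub_retract {α β : Type*} [Preorder α] [Preorder β] (i : α → β) (r : β → α)
    (hi : Monotone i) (hr : Monotone r) (hri : ∀ a, r (i a) = a)
    (h : ∀ S : Set β, ∃ s, IsLUB S s) (S : Set α) : ∃ s, IsLUB S s := by
  obtain ⟨s, hub, hlb⟩ := h (i '' S)
  refine ⟨r s, fun a ha => ?_, fun b hb => ?_⟩
  · rw [← hri a]
    exact hr (hub (Set.mem_image_of_mem i ha))
  · rw [← hri b]
    refine hr (hlb ?_)
    rintro _ ⟨a, ha, rfl⟩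
    exact hi (hb ha)

end Retract

section Split

variable {X : Type*} [TopologicalSpace X] [CompactSpace X] [T2Space X]
  [TotallyDisconnectedSpace X]

lemma clopen_split {C : Set X} (hC : IsClopen C) (hInf : C.Infinite) :
    ∃ D U : Set X, IsClopen D ∧ IsClopen U ∧ D ⊆ C ∧ U ⊆ C ∧ Disjoint D U ∧
      D.Infinite ∧ U.Nonempty := by
  obtain ⟨a, ha, b, hb, hab⟩ := hInf.nontrivial
  obtain ⟨V, hV, haV, hbV⟩ := exists_isClopen_of_totally_separated hab
  by_cases h : (C ∩ V).Infinite
  · exact ⟨C ∩ V, C ∩ Vᶜ, hC.inter hV, hC.inter hV.compl, inter_subset_left,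
      inter_subset_left, disjoint_compl_right.mono inter_subset_right inter_subset_right,
      h, ⟨b, hb, hbV⟩⟩
  · have h2 : (C ∩ Vᶜ).Infinite := by
      rw [Set.not_infinite] at h
      have hsub : C ⊆ (C ∩ V) ∪ (C ∩ Vᶜ) := by
        intro x hx
        by_cases hxV : x ∈ V
        · exact Or.inl ⟨hx, hxV⟩
        · exact Or.inr ⟨hx, hxV⟩
      by_contra h3
      rw [Set.not_infinite] at h3
      exact hInf ((h.union h3).subset hsub)
    exact ⟨C ∩ Vᶜ, C ∩ V, hC.inter hV.compl, hC.inter hV, inter_subset_left,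
      inter_subset_left, disjoint_compl_left.mono inter_subset_right inter_subset_right,
      h2, ⟨a, ha, haV⟩⟩

lemma exists_disjoint_clopen_seq [Infinite X] :
    ∃ U : ℕ → Set X, (∀ n, IsClopen (U n)) ∧ (∀ n, (U n).Nonempty) ∧
      Pairwise (Function.onFun Disjoint U) := by
  classical
  have step : ∀ C : {C : Set X // IsClopen C ∧ C.Infinite},
      ∃ q : ({C : Set X // IsClopen C ∧ C.Infinite} × Set X),
        IsClopen q.2 ∧ (q.1 : Set X) ⊆ (C : Set X) ∧ q.2 ⊆ (C : Set X) ∧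
          Disjoint (q.1 : Set X) q.2 ∧ q.2.Nonempty := by
    rintro ⟨C, hC, hInf⟩
    obtain ⟨D, U, hD, hUcl, hDC, hUC, hdis, hDinf, hUne⟩ := clopen_split hC hInf
    exact ⟨(⟨D, hD, hDinf⟩, U), hUcl, hDC, hUC, hdis, hUne⟩
  choose f hf using step
  let g : ℕ → {C : Set X // IsClopen C ∧ C.Infinite} × Set X := fun n =>
    Nat.rec (f ⟨Set.univ, isClopen_univ, Set.infinite_univ⟩) (fun _ p => f p.1) n
  have hgs : ∀ n, g (n + 1) = f (g n).1 := fun n => rfl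
  have hcl : ∀ n, IsClopen (g n).2 := by
    intro n
    cases n with
    | zero => exact (hf _).1
    | succ m => exact (hf _).1
  have hne : ∀ n, (g n).2.Nonempty := by
    intro n
    cases n with
    | zero => exact (hf _).2.2.2.2
    | succ m => exact (hf _).2.2.2.2
  have hdisj : ∀ n, Disjoint ((g n).1 : Set X) (g n).2 := by
    intro n
    cases n with
    | zero => exact (hf _).2.2.2.1
    | succ m => exact (hf _).2.2.2.1
  have hsub1 : ∀ n, ((g (n + 1)).1 : Set X) ⊆ ((g n).1 : Set X) := fun n => (hf _).2.1
  have hsub2 : ∀ n, (g (n + 1)).2 ⊆ ((g n).1 : Set X) := fun n => (hf _).2.2.1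
  have hanti : ∀ m n, m ≤ n → ((g n).1 : Set X) ⊆ ((g m).1 : Set X) := by
    intro m n hmn
    induction n with
    | zero =>
      have : m = 0 := Nat.le_zero.mp hmn
      subst this; exact subset_rfl
    | succ k ih =>
      rcases Nat.lt_or_ge m (k + 1) with hlt | hge
      · exact (hsub1 k).trans (ih (Nat.lt_succ_iff.mp hlt))
      · have : m = k + 1 := le_antisymm hmn hge
        subst this; exact subset_rfl
  have key : ∀ m n, m < n → Disjoint ((g m).2) ((g n).2) := by
    intro m n hmn
    obtain ⟨k, rfl⟩ : ∃ k, n = k + 1 := ⟨n - 1, by omega⟩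
    have h1 : (g (k + 1)).2 ⊆ ((g m).1 : Set X) :=
      (hsub2 k).trans (hanti m k (by omega))
    exact Disjoint.mono_right h1 (hdisj m).symm
  refine ⟨fun n => (g n).2, hcl, hne, fun m n hmn => ?_⟩
  rcases hmn.lt_or_gt with h | h
  · exact key m n h
  · exact (key n m h).symm

end Split

section Hard

variable {X Y : Type*} [TopologicalSpace X] [CompactSpace X] [T2Space X]
  [TotallyDisconnectedSpace X]
  [TopologicalSpace Y] [CompactSpace Y] [T2Space Y] [TotallyDisconnectedSpace Y]

lemma no_lub_prod (U : ℕ → Set X) (V : ℕ → Set Y)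
    (hU : ∀ n, IsClopen (U n)) (hV : ∀ n, IsClopen (V n))
    (hUne : ∀ n, (U n).Nonempty) (hVne : ∀ n, (V n).Nonempty)
    (hUd : Pairwise (Function.onFun Disjoint U)) (hVd : Pairwise (Function.onFun Disjoint V))
    (s : Clopens (X × Y))
    (hs : IsLUB (Set.range fun n =>
      (⟨U n ×ˢ V n, (hU n).prod (hV n)⟩ : Clopens (X × Y))) s) : False := by
  classical
  choose x hx using hUne
  choose y hy using hVne
  obtain ⟨p, -, hp⟩ := isCompact_univ.ultrafilter_le_nhds ((hyperfilter ℕ).map x)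
    (le_principal_iff.2 univ_mem)
  obtain ⟨q, -, hq⟩ := isCompact_univ.ultrafilter_le_nhds ((hyperfilter ℕ).map y)
    (le_principal_iff.2 univ_mem)
  have hp' : Tendsto x (hyperfilter ℕ) (𝓝 p) := hp
  have hq' : Tendsto y (hyperfilter ℕ) (𝓝 q) := hq
  have htends : Tendsto (fun n => (x n, y n)) (hyperfilter ℕ) (𝓝 (p, q)) :=
    hp'.prodMk_nhds hq'
  have hmem : ∀ n, (x n, y n) ∈ (s : Set (X × Y)) := by
    intro n
    have hle := hs.1 (Set.mem_range_self n)
    exact SetLike.le_def.mp hle (show (x n, y n) ∈ (U n ×ˢ V n : Set (X × Y)) from ⟨hx n, hy n⟩)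
  have hpq : (p, q) ∈ (s : Set (X × Y)) :=
    s.isClopen.isClosed.mem_of_tendsto htends (Filter.Eventually.of_forall hmem)
  obtain ⟨A, B, hA, hB, hpA, hqB, hABs⟩ := isOpen_prod_iff.mp s.isClopen.isOpen p q hpq
  obtain ⟨C, hCcl, hpC, hCA⟩ := compact_exists_isClopen_in_isOpen hA hpA
  obtain ⟨D, hDcl, hqD, hDB⟩ := compact_exists_isClopen_in_isOpen hB hqB
  have hCu : x ⁻¹' C ∈ hyperfilter ℕ := hp' (hCcl.isOpen.mem_nhds hpC)
  have hDu : y ⁻¹' D ∈ hyperfilter ℕ := hq' (hDcl.isOpen.mem_nhds hqD)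
  obtain ⟨m, hm⟩ : (x ⁻¹' C).Nonempty := Ultrafilter.nonempty_of_mem hCu
  have hDinf : (y ⁻¹' D).Infinite := by
    by_contra hfin
    exact (Set.not_infinite.mp hfin).notMem_hyperfilter hDu
  obtain ⟨k, hk⟩ : ((y ⁻¹' D) \ {m}).Nonempty := (hDinf.diff (Set.finite_singleton m)).nonempty
  have hkm : k ≠ m := hk.2
  -- the point z is in s
  have hz : (x m, y k) ∈ (s : Set (X × Y)) := hABs ⟨hCA hm, hDB hk.1⟩
  -- build the smaller upper bound
  set t : Clopens (X × Y) := s \ ⟨U m ×ˢ V k, (hU m).prod (hV k)⟩ with ht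
  have hub : t ∈ upperBounds (Set.range fun n =>
      (⟨U n ×ˢ V n, (hU n).prod (hV n)⟩ : Clopens (X × Y))) := by
    rintro _ ⟨n, rfl⟩
    rw [SetLike.le_def]
    rintro ⟨a, b⟩ hab
    have habs : (a, b) ∈ (s : Set (X × Y)) :=
      SetLike.le_def.mp (hs.1 (Set.mem_range_self n)) hab
    have hnot : (a, b) ∉ (U m ×ˢ V k : Set (X × Y)) := by
      rintro ⟨haU, hbV⟩
      have hnm : n = m := by
        by_contra hne
        exact (Set.disjoint_left.mp (hUd hne)) hab.1 haU
      have hnk : n = k := by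
        by_contra hne
        exact (Set.disjoint_left.mp (hVd hne)) hab.2 hbV
      exact hkm (hnk ▸ hnm ▸ rfl)
    exact ⟨habs, hnot⟩
  have hst : s ≤ t := hs.2 hub
  have := SetLike.le_def.mp hst hz
  exact this.2 ⟨hx m, hy k⟩

end Hard

section Backward

/-- If `X` is finite (and `T2`) and `Clopens Y` is complete, then `Clopens (X × Y)` is
complete. -/
lemma prod_complete_of_finite_left {X Y : Type*} [TopologicalSpace X] [Finite X] [T2Space X]
    [TopologicalSpace Y]
    (hY : ∀ S : Set (Clopens Y), ∃ s, IsLUB S s) (S : Set (Clopens (X × Y))) :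
    ∃ s : Clopens (X × Y), IsLUB S s := by
  classical
  haveI : Fintype X := Fintype.ofFinite X
  let sec : X → Clopens (X × Y) → Clopens Y := fun a W =>
    ⟨Prod.mk a ⁻¹' (W : Set (X × Y)), W.isClopen.preimage (Continuous.prodMk_right a)⟩
  have hsec : ∀ a (W W' : Clopens (X × Y)), W ≤ W' → sec a W ≤ sec a W' := by
    intro a W W' hWW'
    rw [SetLike.le_def]
    intro b hb
    exact SetLike.le_def.mp hWW' hb
  have ht := fun a => (hY (sec a '' S)).choose_spec
  set t : X → Clopens Y := fun a => (hY (sec a '' S)).choose with htdef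
  let box : X → Clopens (X × Y) := fun a =>
    ⟨({a} : Set X) ×ˢ (t a : Set Y), (isClopen_discrete _).prod (t a).isClopen⟩
  refine ⟨Finset.univ.sup box, ?_, ?_⟩
  · -- upper bound
    intro W hW
    rw [SetLike.le_def]
    rintro ⟨a, b⟩ hab
    have hbt : b ∈ t a := SetLike.le_def.mp ((ht a).1 (Set.mem_image_of_mem _ hW)) hab
    exact SetLike.le_def.mp (Finset.le_sup (Finset.mem_univ a))
      (show (a, b) ∈ box a from ⟨rfl, hbt⟩)
  · -- least
    intro u hu
    refine Finset.sup_le fun a _ => ?_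
    rw [SetLike.le_def]
    rintro ⟨a', b⟩ ⟨ha', hb⟩
    have ha'' : a' = a := ha'
    subst ha''
    have htu : t a' ≤ sec a' u := by
      refine (ht a').2 ?_
      rintro _ ⟨W, hW, rfl⟩
      exact hsec a' W u (hu hW)
    exact SetLike.le_def.mp htu hb

end Backward

theorem stmt5 {X Y : Type*}
    [TopologicalSpace X] [CompactSpace X] [T2Space X] [TotallyDisconnectedSpace X] [Nonempty X]
    [TopologicalSpace Y] [CompactSpace Y] [T2Space Y] [TotallyDisconnectedSpace Y] [Nonempty Y] :
    (∀ S : Set (Clopens (X × Y)), ∃ s : Clopens (X × Y), IsLUB S s) ↔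
      (Finite (Clopens X) ∧ ∀ S : Set (Clopens Y), ∃ s : Clopens Y, IsLUB S s) ∨
      (Finite (Clopens Y) ∧ ∀ S : Set (Clopens X), ∃ s : Clopens X, IsLUB S s) := by
  classical
  constructor
  · intro h
    obtain ⟨y0⟩ := ‹Nonempty Y›
    obtain ⟨x0⟩ := ‹Nonempty X›
    -- Clopens X is complete
    have hXc : ∀ S : Set (Clopens X), ∃ s, IsLUB S s := by
      refine lub_retract (fun U : Clopens X => U ×ˢ (⊤ : Clopens Y))
        (fun W : Clopens (X × Y) =>
          ⟨(fun a => (a, y0)) ⁻¹' (W : Set (X × Y)),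
            W.isClopen.preimage (Continuous.prodMk_left y0)⟩)
        ?_ ?_ ?_ h
      · intro a b hab
        rw [SetLike.le_def]
        rintro ⟨c, d⟩ ⟨hc, hd⟩
        exact ⟨SetLike.le_def.mp hab hc, hd⟩
      · intro a b hab
        rw [SetLike.le_def]
        intro c hc
        exact SetLike.le_def.mp hab hc
      · intro a
        ext c
        exact ⟨fun hc => hc.1, fun hc => ⟨hc, trivial⟩⟩
    have hYc : ∀ S : Set (Clopens Y), ∃ s, IsLUB S s := by
      refine lub_retract (fun U : Clopens Y => (⊤ : Clopens X) ×ˢ U)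
        (fun W : Clopens (X × Y) =>
          ⟨Prod.mk x0 ⁻¹' (W : Set (X × Y)),
            W.isClopen.preimage (Continuous.prodMk_right x0)⟩)
        ?_ ?_ ?_ h
      · intro a b hab
        rw [SetLike.le_def]
        rintro ⟨c, d⟩ ⟨hc, hd⟩
        exact ⟨hc, SetLike.le_def.mp hab hd⟩
      · intro a b hab
        rw [SetLike.le_def]
        intro c hc
        exact SetLike.le_def.mp hab hc
      · intro a
        ext c
        exact ⟨fun hc => hc.2, fun hc => ⟨trivial, hc⟩⟩
    have hfin : Finite (Clopens X) ∨ Finite (Clopens Y) := by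
      by_contra hcon
      push_neg at hcon
      obtain ⟨hnX, hnY⟩ := hcon
      have hXinf : Infinite X := by
        by_contra hX
        have : Finite X := not_infinite_iff_finite.mp hX
        exact (not_finite_iff_infinite.mpr hnX) (Finite.of_injective (fun C : Clopens X => (C : Set X))
          SetLike.coe_injective)
      have hYinf : Infinite Y := by
        by_contra hY'
        have : Finite Y := not_infinite_iff_finite.mp hY'
        exact (not_finite_iff_infinite.mpr hnY) (Finite.of_injective (fun C : Clopens Y => (C : Set Y))
          SetLike.coe_injective)
      obtain ⟨U, hUcl, hUne, hUd⟩ := exists_disjoint_clopen_seq (X := X)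
      obtain ⟨V, hVcl, hVne, hVd⟩ := exists_disjoint_clopen_seq (X := Y)
      obtain ⟨s, hs⟩ := h (Set.range fun n =>
        (⟨U n ×ˢ V n, (hUcl n).prod (hVcl n)⟩ : Clopens (X × Y)))
      exact no_lub_prod U V hUcl hVcl hUne hVne hUd hVd s hs
    rcases hfin with hfin | hfin
    · exact Or.inl ⟨hfin, hYc⟩
    · exact Or.inr ⟨hfin, hXc⟩
  · -- backward
    rintro (⟨hfin, hYc⟩ | ⟨hfin, hXc⟩)
    · -- X finite
      haveI : Finite X := by
        haveI := hfin
        refine Finite.of_injective (fun a : X => fun C : Clopens X => a ∈ C) ?_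
        intro a b hab
        by_contra hne
        obtain ⟨W, hW, haW, hbW⟩ := exists_isClopen_of_totally_separated hne
        have : (a ∈ (⟨W, hW⟩ : Clopens X)) = (b ∈ (⟨W, hW⟩ : Clopens X)) :=
          congrFun hab _
        exact hbW (this ▸ haW)
      exact prod_complete_of_finite_left hYc
    · -- Y finite
      haveI : Finite Y := by
        haveI := hfin
        refine Finite.of_injective (fun a : Y => fun C : Clopens Y => a ∈ C) ?_
        intro a b hab
        by_contra hne
        obtain ⟨W, hW, haW, hbW⟩ := exists_isClopen_of_totally_separated hne
        have : (a ∈ (⟨W, hW⟩ : Clopens Y)) = (b ∈ (⟨W, hW⟩ : Clopens Y)) :=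
          congrFun hab _
        exact hbW (this ▸ haW)
      have hYXc : ∀ S : Set (Clopens (Y × X)), ∃ s, IsLUB S s :=
        prod_complete_of_finite_left hXc
      -- transfer along the swap homeomorphism
      refine lub_retract
        (fun W : Clopens (X × Y) =>
          ⟨Prod.swap ⁻¹' (W : Set (X × Y)), W.isClopen.preimage continuous_swap⟩)
        (fun W : Clopens (Y × X) =>
          ⟨Prod.swap ⁻¹' (W : Set (Y × X)), W.isClopen.preimage continuous_swap⟩)
        ?_ ?_ ?_ hYXc
      · intro a b hab
        rw [SetLike.le_def]
        intro c hc
        exact SetLike.le_def.mp hab hc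
      · intro a b hab
        rw [SetLike.le_def]
        intro c hc
        exact SetLike.le_def.mp hab hc
      · intro a
        ext ⟨c, d⟩
        rfl
end

section
/- Let E be an infinite-dimensional Archimedean Riesz space. Then there exists a sequence (x_n) of nonzero elements of E that are pairwise disjoint (|x_i| ∧ |x_j| = 0 for i ≠ j), and the corresponding principal bands {x_n}⊥⊥ are pairwise distinct; in particular, the collection of subsets of E of the form {x}⊥⊥ with x ∈ E is infinite, so the Boolean algebra of bands of E is not finite. -/
set_option linter.unusedSectionVars false

/-- The disjoint complement `S⊥ = {y : ∀ s ∈ S, |y| ⊓ |s| = 0}` of a subset of a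
Riesz space. -/
def disjComplement {E : Type*} [Lattice E] [AddCommGroup E] (S : Set E) : Set E :=
  {y : E | ∀ s ∈ S, |y| ⊓ |s| = 0}

namespace Stmt9Aux

variable {E : Type*} [Lattice E] [AddCommGroup E]
  [CovariantClass E E (· + ·) (· ≤ ·)]

lemma inf_nonneg' {a b : E} (ha : 0 ≤ a) (hb : 0 ≤ b) : 0 ≤ a ⊓ b := le_inf ha hb

/-- L3 -/
lemma inf_add_le_add_inf {a b c : E} (ha : 0 ≤ a) (hb : 0 ≤ b) (hc : 0 ≤ c) :
    (a + b) ⊓ c ≤ a ⊓ c + b ⊓ c := by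
  have h1 : a ⊓ c + b ⊓ c = ((a + b) ⊓ (a + c)) ⊓ ((c + b) ⊓ (c + c)) := by
    rw [inf_add, add_inf, add_inf]
  rw [h1]
  refine le_inf (le_inf inf_le_left ?_) (le_inf ?_ ?_)
  · exact le_trans inf_le_right (le_add_of_nonneg_left ha)
  · exact le_trans inf_le_right (le_add_of_nonneg_right hb)
  · exact le_trans inf_le_right (le_add_of_nonneg_left hc)

lemma inf_eq_zero_of_le {a b c : E} (hab : a ≤ b) (ha : 0 ≤ a)
    (h : b ⊓ c = 0) (hc : 0 ≤ c) : a ⊓ c = 0 :=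
  le_antisymm (h ▸ inf_le_inf_right c hab) (le_inf ha hc)

lemma nsmul_inf_eq_zero {a c : E} (ha : 0 ≤ a) (hc : 0 ≤ c)
    (h : a ⊓ c = 0) (n : ℕ) : (n • a) ⊓ c = 0 := by
  induction n with
  | zero => simpa using le_antisymm (inf_le_left) (le_inf le_rfl hc)
  | succ k ih =>
    have : ((k • a) + a) ⊓ c ≤ (k • a) ⊓ c + a ⊓ c :=
      inf_add_le_add_inf (nsmul_nonneg ha k) ha hc
    rw [ih, h, add_zero] at this
    have h0 : 0 ≤ ((k+1) • a) ⊓ c := le_inf (nsmul_nonneg ha _) hc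
    rw [succ_nsmul]
    exact le_antisymm (by simpa using this) (by simpa [succ_nsmul] using h0)
end Stmt9Aux

namespace Stmt9Aux

variable {E : Type*} [Lattice E] [AddCommGroup E]
  [CovariantClass E E (· + ·) (· ≤ ·)]

/-- principal band -/
def band (x : E) : Set E := disjComplement (disjComplement ({x} : Set E))

lemma mem_dcomp {S : Set E} {y : E} : y ∈ disjComplement S ↔ ∀ s ∈ S, |y| ⊓ |s| = 0 :=
  Iff.rfl

lemma dcomp_solid {S : Set E} {a b : E} (h : |a| ≤ |b|) (hb : b ∈ disjComplement S) :
    a ∈ disjComplement S := fun s hs =>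
  inf_eq_zero_of_le h (abs_nonneg a) (hb s hs) (abs_nonneg s)

lemma zero_mem_dcomp (S : Set E) : (0 : E) ∈ disjComplement S := fun s _ => by
  simp [le_antisymm inf_le_left (le_inf le_rfl (abs_nonneg s))]

lemma neg_mem_dcomp {S : Set E} {a : E} (ha : a ∈ disjComplement S) :
    -a ∈ disjComplement S := dcomp_solid (by rw [abs_neg]) ha

lemma add_mem_dcomp {S : Set E} {a b : E} (ha : a ∈ disjComplement S)
    (hb : b ∈ disjComplement S) : a + b ∈ disjComplement S := by
  intro s hs
  have h1 : (|a| + |b|) ⊓ |s| = 0 := by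
    have := inf_add_le_add_inf (abs_nonneg a) (abs_nonneg b) (abs_nonneg s)
    rw [ha s hs, hb s hs, add_zero] at this
    exact le_antisymm this (le_inf (by positivity) (abs_nonneg s))
  exact inf_eq_zero_of_le (abs_add_le a b) (abs_nonneg _) h1 (abs_nonneg s)

lemma mem_band_self (x : E) : x ∈ band x := fun s hs => by
  rw [inf_comm]; exact hs x rfl

lemma abs_mem_band (x : E) : |x| ∈ band x :=
  dcomp_solid (le_of_eq (abs_abs x)) (mem_band_self x)

lemma disj_of_mem_band {x z w : E} (hz : |z| ⊓ |x| = 0) (hw : w ∈ band x) :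
    |w| ⊓ |z| = 0 :=
  hw z (fun s hs => by rw [Set.mem_singleton_iff] at hs; subst hs; exact hz)

lemma band_mono {x y : E} (hxy : x ∈ band y) : band x ⊆ band y := by
  intro w hw s hs
  exact hw s (fun t ht => by
    rw [Set.mem_singleton_iff] at ht; subst ht
    rw [inf_comm]; exact hxy s hs)

lemma abs_eq_zero' {a : E} (h : |a| = 0) : a = 0 :=
  le_antisymm (h ▸ le_abs_self a) (by simpa [h] using neg_le_abs a)
end Stmt9Aux

namespace Stmt9Aux

variable {E : Type*} [Lattice E] [AddCommGroup E]
  [CovariantClass E E (· + ·) (· ≤ ·)] [Module ℝ E] [PosSMulMono ℝ E]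

lemma smul_le_smul_right' {c₁ c₂ : ℝ} {a : E} (h : c₁ ≤ c₂) (ha : 0 ≤ a) :
    c₁ • a ≤ c₂ • a := by
  have h2 : 0 ≤ (c₂ - c₁) • a := smul_nonneg (sub_nonneg.2 h) ha
  rw [sub_smul, sub_nonneg] at h2
  exact h2

lemma abs_smul_le' (c : ℝ) (a : E) : |c • a| ≤ |c| • |a| := by
  rcases le_total 0 c with hc | hc
  · rw [abs_of_nonneg hc]
    refine abs_le'.mpr ⟨?_, ?_⟩
    · exact smul_le_smul_of_nonneg_left (le_abs_self a) hc
    · rw [← smul_neg]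
      exact smul_le_smul_of_nonneg_left (neg_le_abs a) hc
  · rw [abs_of_nonpos hc]
    refine abs_le'.mpr ⟨?_, ?_⟩
    · rw [show c • a = (-c) • (-a) by rw [neg_smul, smul_neg, neg_neg]]
      exact smul_le_smul_of_nonneg_left (neg_le_abs a) (by linarith)
    · rw [show -(c • a) = (-c) • a by rw [neg_smul]]
      exact smul_le_smul_of_nonneg_left (le_abs_self a) (by linarith)

lemma smul_mem_dcomp {S : Set E} {a : E} (c : ℝ) (ha : a ∈ disjComplement S) :
    c • a ∈ disjComplement S := by
  intro s hs
  obtain ⟨n, hn⟩ := exists_nat_ge |c|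
  have h1 : |c • a| ≤ n • |a| := by
    refine le_trans (abs_smul_le' c a) ?_
    rw [← Nat.cast_smul_eq_nsmul ℝ]
    exact smul_le_smul_right' hn (abs_nonneg a)
  refine inf_eq_zero_of_le h1 (abs_nonneg _) ?_ (abs_nonneg s)
  exact nsmul_inf_eq_zero (abs_nonneg a) (abs_nonneg s) (ha s hs) n

/-- If `T = {c | c • a ≤ y}` then `sSup T • a ≤ y`. -/
lemma sSup_smul_le (arch : ∀ x y : E, 0 ≤ x → 0 ≤ y → (∀ n : ℕ, n • y ≤ x) → y = 0)
    {a y : E} (ha : 0 ≤ a) (hy : 0 ≤ y)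
    (hb : BddAbove {c : ℝ | c • a ≤ y}) :
    sSup {c : ℝ | c • a ≤ y} • a ≤ y := by
  set T := {c : ℝ | c • a ≤ y} with hT
  have hne : T.Nonempty := ⟨0, by simpa [hT] using hy⟩
  set l := sSup T with hl
  have key : ∀ n : ℕ, n • (l • a - y)⁺ ≤ a := by
    intro n
    rcases Nat.eq_zero_or_pos n with h0 | hpos
    · simpa [h0] using ha
    · obtain ⟨c, hcT, hc⟩ := exists_lt_of_lt_csSup hne
        (show l - 1/(n:ℝ) < l by
          have : (0:ℝ) < 1/(n:ℝ) := by positivity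
          linarith)
      have h1 : l • a - y ≤ (1/(n:ℝ)) • a := by
        have h2 : l • a - y ≤ l • a - c • a := by
          have := hcT
          simp only [hT, Set.mem_setOf_eq] at this
          exact sub_le_sub_left this _
        rw [← sub_smul] at h2
        refine le_trans h2 (smul_le_smul_right' (by linarith) ha)
      have h3 : (l • a - y)⁺ ≤ (1/(n:ℝ)) • a :=
        le_trans (posPart_mono h1)
          (posPart_eq_self.mpr (smul_nonneg (by positivity) ha)).le
      calc n • (l • a - y)⁺ = (n : ℝ) • (l • a - y)⁺ := by
            rw [Nat.cast_smul_eq_nsmul]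
          _ ≤ (n : ℝ) • ((1/(n:ℝ)) • a) := smul_le_smul_of_nonneg_left h3 (by positivity)
          _ = a := by
            rw [smul_smul, mul_one_div, div_self (by exact_mod_cast hpos.ne'), one_smul]
  have := arch a ((l • a - y)⁺) ha (posPart_nonneg _) key
  rw [posPart_eq_zero] at this
  exact sub_nonpos.mp this


/-- Totally ordered band -/
def IsTO (d : E) : Prop := ∀ b ∈ band d, 0 ≤ b ∨ b ≤ 0

lemma isTO_compare {d : E} (h : IsTO d) {u v : E} (hu : u ∈ band d) (hv : v ∈ band d) :
    u ≤ v ∨ v ≤ u := by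
  rcases h (v - u) (by rw [sub_eq_add_neg]; exact add_mem_dcomp hv (neg_mem_dcomp hu)) with h1 | h1
  · exact Or.inl (sub_nonneg.mp h1)
  · exact Or.inr (sub_nonpos.mp h1)

/-- Hölder-type lemma: a bounded positive element of a totally ordered principal band
is a multiple of the generator. -/
lemma exists_smul_eq (arch : ∀ x y : E, 0 ≤ x → 0 ≤ y → (∀ n : ℕ, n • y ≤ x) → y = 0)
    {d w : E} (hd : d ≠ 0) (hTO : IsTO d) (hw0 : 0 ≤ w) (hwb : w ∈ band d)
    (hwle : w ≤ |d|) : ∃ μ : ℝ, 0 ≤ μ ∧ w = μ • |d| := by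
  set a := |d| with haa
  have ha0 : 0 ≤ a := abs_nonneg d
  have hane : a ≠ 0 := fun h => hd (abs_eq_zero' h)
  have hab : a ∈ band d := abs_mem_band d
  set T := {c : ℝ | c • a ≤ w} with hT
  have h0T : (0:ℝ) ∈ T := by simpa [hT] using hw0
  have hbdd : BddAbove T := by
    refine ⟨1, fun c hc => ?_⟩
    by_contra hc1
    push_neg at hc1
    have h1 : c • a ≤ a := le_trans hc hwle
    have h2 : (c - 1) • a ≤ 0 := by
      rw [sub_smul]
      simpa using sub_le_sub_right h1 a
    have h3 : (c - 1) • a = 0 := le_antisymm h2 (smul_nonneg (by linarith) ha0)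
    have : a = 0 := by
      have := congrArg (fun z => (c - 1)⁻¹ • z) h3
      simpa [smul_smul, inv_mul_cancel₀ (show c - 1 ≠ 0 by linarith)] using this
    exact hane this
  set μ := sSup T with hμ
  have hμ0 : 0 ≤ μ := le_csSup hbdd h0T
  have hμle : μ • a ≤ w := sSup_smul_le arch ha0 hw0 hbdd
  refine ⟨μ, hμ0, ?_⟩
  set r := w - μ • a with hr
  have hr0 : 0 ≤ r := sub_nonneg.mpr hμle
  have hrb : r ∈ band d := by
    rw [hr, sub_eq_add_neg]
    exact add_mem_dcomp hwb (neg_mem_dcomp (smul_mem_dcomp μ hab))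
  by_contra hne
  have hrne : r ≠ 0 := fun h => hne (by rw [hr] at h; exact (sub_eq_zero.mp h))
  have hnex : ∃ n : ℕ, ¬ (n • r ≤ a) := by
    by_contra hall
    push_neg at hall
    exact hrne (arch a r ha0 hr0 hall)
  obtain ⟨n, hn⟩ := hnex
  have hnpos : 0 < n := by
    rcases Nat.eq_zero_or_pos n with h | h
    · exact absurd (by simpa [h] using ha0) hn
    · exact h
  have hmem : (1/(n:ℝ)) • a ∈ band d := smul_mem_dcomp _ hab
  rcases isTO_compare hTO hrb hmem with h1 | h1
  · -- r ≤ (1/n) • a, so n • r ≤ a, contradiction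
    refine hn ?_
    calc n • r = (n:ℝ) • r := (Nat.cast_smul_eq_nsmul ℝ n r).symm
      _ ≤ (n:ℝ) • ((1/(n:ℝ)) • a) := smul_le_smul_of_nonneg_left h1 (by positivity)
      _ = a := by
        rw [smul_smul, mul_one_div, div_self (by exact_mod_cast hnpos.ne'), one_smul]
  · -- (1/n) • a ≤ r, so μ + 1/n ∈ T, contradicting sup
    have h2 : (μ + 1/(n:ℝ)) • a ≤ w := by
      rw [add_smul]
      calc μ • a + (1/(n:ℝ)) • a ≤ μ • a + r := add_le_add_right h1 _
        _ = w := by rw [hr]; abel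
    have h3 : μ + 1/(n:ℝ) ≤ μ := le_csSup hbdd h2
    have h4 : (0:ℝ) < 1/(n:ℝ) := by positivity
    linarith only [h3, h4]
lemma sum_nonneg' {ι : Type*} (s : Finset ι) (b : ι → E) (h0 : ∀ i ∈ s, 0 ≤ b i) :
    0 ≤ ∑ i ∈ s, b i := by
  classical
  induction s using Finset.induction_on with
  | empty => simp
  | @insert a s' hni ih =>
    rw [Finset.sum_insert hni]
    exact add_nonneg (h0 a (Finset.mem_insert_self a s'))
      (ih (fun i hi => h0 i (Finset.mem_insert_of_mem hi)))

lemma inf_sum_eq_zero {ι : Type*} (s : Finset ι) (b : ι → E) {c : E} (hc : 0 ≤ c)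
    (h0 : ∀ i ∈ s, 0 ≤ b i) (hdc : ∀ i ∈ s, c ⊓ b i = 0) :
    c ⊓ ∑ i ∈ s, b i = 0 := by
  classical
  induction s using Finset.induction_on with
  | empty => simpa using le_antisymm inf_le_right (le_inf hc le_rfl)
  | @insert a s' hni ih =>
    rw [Finset.sum_insert hni]
    have hsum0 : 0 ≤ ∑ i ∈ s', b i :=
      sum_nonneg' s' b (fun i hi => h0 i (Finset.mem_insert_of_mem hi))
    have h1 : (b a + ∑ i ∈ s', b i) ⊓ c ≤ (b a) ⊓ c + (∑ i ∈ s', b i) ⊓ c :=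
      inf_add_le_add_inf (h0 a (Finset.mem_insert_self a s')) hsum0 hc
    rw [inf_comm (b a) c, hdc a (Finset.mem_insert_self a s'),
      inf_comm (∑ i ∈ s', b i) c,
      ih (fun i hi => h0 i (Finset.mem_insert_of_mem hi))
        (fun i hi => hdc i (Finset.mem_insert_of_mem hi)), add_zero] at h1
    rw [inf_comm]
    exact le_antisymm h1 (le_inf (add_nonneg (h0 a (Finset.mem_insert_self a s')) hsum0) hc)

lemma sum_disjoint_le {ι : Type*} (s : Finset ι) (b : ι → E) (y : E) (hy : 0 ≤ y)
    (h0 : ∀ i ∈ s, 0 ≤ b i)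
    (hd : ∀ i ∈ s, ∀ j ∈ s, i ≠ j → b i ⊓ b j = 0)
    (hle : ∀ i ∈ s, b i ≤ y) : ∑ i ∈ s, b i ≤ y := by
  classical
  induction s using Finset.induction_on with
  | empty => simpa using hy
  | @insert a s' hni ih =>
    rw [Finset.sum_insert hni]
    have hsle : ∑ i ∈ s', b i ≤ y := ih (fun i hi => h0 i (Finset.mem_insert_of_mem hi))
      (fun i hi j hj hij => hd i (Finset.mem_insert_of_mem hi) j (Finset.mem_insert_of_mem hj) hij)
      (fun i hi => hle i (Finset.mem_insert_of_mem hi))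
    have hdisj : (b a) ⊓ (∑ i ∈ s', b i) = 0 :=
      inf_sum_eq_zero s' b (h0 a (Finset.mem_insert_self a s'))
        (fun i hi => h0 i (Finset.mem_insert_of_mem hi))
        (fun i hi => hd a (Finset.mem_insert_self a s') i (Finset.mem_insert_of_mem hi)
          (fun h => hni (h ▸ hi)))
    have heq : b a + ∑ i ∈ s', b i = (b a) ⊔ (∑ i ∈ s', b i) := by
      have h2 := inf_add_sup (b a) (∑ i ∈ s', b i)
      rw [hdisj, zero_add] at h2
      exact h2.symm
    rw [heq]
    exact sup_le (hle a (Finset.mem_insert_self a s')) hsle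

lemma smul_inf_smul_eq_zero {a b : E} (ha : 0 ≤ a) (hb : 0 ≤ b) (h : a ⊓ b = 0)
    {c c' : ℝ} (hc : 0 ≤ c) (hc' : 0 ≤ c') : (c • a) ⊓ (c' • b) = 0 := by
  obtain ⟨n, hn⟩ := exists_nat_ge c
  obtain ⟨m, hm⟩ := exists_nat_ge c'
  have h1 : (n • a) ⊓ b = 0 := nsmul_inf_eq_zero ha hb h n
  have h2 : (m • b) ⊓ (n • a) = 0 :=
    nsmul_inf_eq_zero hb (nsmul_nonneg ha n) (by rw [inf_comm]; exact h1) m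
  have h3 : (n • a) ⊓ (m • b) = 0 := by rw [inf_comm]; exact h2
  have hca : c • a ≤ n • a := by
    rw [← Nat.cast_smul_eq_nsmul ℝ]
    exact smul_le_smul_right' hn ha
  have hcb : c' • b ≤ m • b := by
    rw [← Nat.cast_smul_eq_nsmul ℝ]
    exact smul_le_smul_right' hm hb
  refine le_antisymm ?_ (le_inf (smul_nonneg hc ha) (smul_nonneg hc' hb))
  calc (c • a) ⊓ (c' • b) ≤ (n • a) ⊓ (m • b) := inf_le_inf hca hcb
    _ = 0 := h3

/-- The spanning lemma: a full disjoint family with totally ordered bands spans. -/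
lemma span_eq_top (arch : ∀ x y : E, 0 ≤ x → 0 ≤ y → (∀ n : ℕ, n • y ≤ x) → y = 0)
    (D : Finset E)
    (hnz : ∀ d ∈ D, d ≠ 0) (hTO : ∀ d ∈ D, IsTO d)
    (hdisj : ∀ d ∈ D, ∀ d' ∈ D, d ≠ d' → |d| ⊓ |d'| = 0)
    (hfull : ∀ z : E, (∀ d ∈ D, |z| ⊓ |d| = 0) → z = 0) :
    ∀ y : E, y ∈ Submodule.span ℝ (D : Set E) := by
  classical
  have habs_span : ∀ d ∈ D, |d| ∈ Submodule.span ℝ (D : Set E) := by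
    intro d hd
    rcases hTO d hd d (mem_band_self d) with h | h
    · rw [abs_of_nonneg h]; exact Submodule.subset_span hd
    · rw [abs_of_nonpos h]; exact Submodule.neg_mem _ (Submodule.subset_span hd)
  -- first: nonnegative elements
  have hpos : ∀ y : E, 0 ≤ y → y ∈ Submodule.span ℝ (D : Set E) := by
    intro y hy
    set T : E → Set ℝ := fun d => {c : ℝ | c • |d| ≤ y} with hTdef
    have h0T : ∀ d, (0:ℝ) ∈ T d := fun d => by simpa [hTdef] using hy
    have hbdd : ∀ d ∈ D, BddAbove (T d) := by
      intro d hd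
      by_contra hnb
      rw [not_bddAbove_iff] at hnb
      have : ∀ n : ℕ, n • |d| ≤ y := by
        intro n
        obtain ⟨c, hcT, hc⟩ := hnb (n : ℝ)
        calc n • |d| = (n:ℝ) • |d| := (Nat.cast_smul_eq_nsmul ℝ n |d|).symm
          _ ≤ c • |d| := smul_le_smul_right' hc.le (abs_nonneg d)
          _ ≤ y := hcT
      exact hnz d hd (abs_eq_zero' (arch y |d| hy (abs_nonneg d) this))
    set l : E → ℝ := fun d => sSup (T d) with hldef
    have hl0 : ∀ d ∈ D, 0 ≤ l d := fun d hd => le_csSup (hbdd d hd) (h0T d)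
    have hly : ∀ d ∈ D, l d • |d| ≤ y := fun d hd =>
      sSup_smul_le arch (abs_nonneg d) hy (hbdd d hd)
    set z := y - ∑ d ∈ D, l d • |d| with hzdef
    have hsum_le : ∑ d ∈ D, l d • |d| ≤ y := by
      refine sum_disjoint_le D (fun d => l d • |d|) y hy ?_ ?_ ?_
      · exact fun d hd => smul_nonneg (hl0 d hd) (abs_nonneg d)
      · intro d hd d' hd' hdd'
        exact smul_inf_smul_eq_zero (abs_nonneg d) (abs_nonneg d')
          (hdisj d hd d' hd' hdd') (hl0 d hd) (hl0 d' hd')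
      · exact fun d hd => hly d hd
    have hz0 : 0 ≤ z := sub_nonneg.mpr hsum_le
    have hzd : ∀ d ∈ D, z ⊓ |d| = 0 := by
      intro d hd
      set w := z ⊓ |d| with hwdef
      have hw0 : 0 ≤ w := le_inf hz0 (abs_nonneg d)
      have hwle : w ≤ |d| := inf_le_right
      have hwb : w ∈ band d := by
        intro s hs
        have hsd : |s| ⊓ |d| = 0 := hs d rfl
        exact inf_eq_zero_of_le (le_trans (le_of_eq (abs_of_nonneg hw0)) hwle)
          (abs_nonneg w) (by rw [inf_comm]; exact hsd) (abs_nonneg s)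
      obtain ⟨μ, hμ0, hμeq⟩ := exists_smul_eq arch (hnz d hd) (hTO d hd) hw0 hwb hwle
      by_contra hwne
      have hμpos : 0 < μ := by
        rcases lt_or_eq_of_le hμ0 with h | h
        · exact h
        · exact absurd (by rw [hμeq, ← h, zero_smul]) hwne
      -- (l d + μ) • |d| ≤ y
      have hkey : (l d + μ) • |d| ≤ y := by
        have h1 : μ • |d| ≤ z := hμeq ▸ inf_le_left
        have h2 : l d • |d| + z ≤ y := by
          have h3 : 0 ≤ ∑ d' ∈ D.erase d, l d' • |d'| :=
            sum_nonneg' _ _ (fun d' hd' =>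
              smul_nonneg (hl0 d' (Finset.mem_of_mem_erase hd')) (abs_nonneg d'))
          have h4 : l d • |d| + z = y - ∑ d' ∈ D.erase d, l d' • |d'| := by
            rw [hzdef, ← Finset.add_sum_erase D _ hd]
            abel
          rw [h4]
          exact sub_le_self y h3
        rw [add_smul]
        calc l d • |d| + μ • |d| ≤ l d • |d| + z := add_le_add_right h1 _
          _ ≤ y := h2
      have : l d + μ ≤ l d := le_csSup (hbdd d hd) hkey
      linarith only [this, hμpos]
    have hzz : z = 0 := hfull z (fun d hd => by
      rw [abs_of_nonneg hz0]; exact hzd d hd)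
    have hyeq : y = ∑ d ∈ D, l d • |d| := by
      rw [hzdef] at hzz
      exact sub_eq_zero.mp hzz
    rw [hyeq]
    exact Submodule.sum_mem _ (fun d hd => Submodule.smul_mem _ _ (habs_span d hd))
  intro y
  have hy : y = y⁺ - y⁻ := (posPart_sub_negPart y).symm
  rw [hy]
  exact Submodule.sub_mem _ (hpos _ (posPart_nonneg y)) (hpos _ (negPart_nonneg y))

lemma posPart_le_abs' (b : E) : b⁺ ≤ |b| := sup_le (le_abs_self b) (abs_nonneg b)

lemma negPart_le_abs' (b : E) : b⁻ ≤ |b| := by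
  have : (-b)⁺ ≤ |(-b)| := posPart_le_abs' (-b)
  simpa using this

lemma not_isTO {e : E} (h : ¬ IsTO e) :
    ∃ u v : E, u ≠ 0 ∧ v ≠ 0 ∧ u ∈ band e ∧ v ∈ band e ∧ |u| ⊓ |v| = 0 := by
  rw [IsTO] at h
  push_neg at h
  obtain ⟨b, hb, hb1, hb2⟩ := h
  refine ⟨b⁺, b⁻, ?_, ?_, ?_, ?_, ?_⟩
  · exact fun hh => hb2 (posPart_eq_zero.mp hh)
  · exact fun hh => hb1 (negPart_eq_zero.mp hh)
  · exact dcomp_solid (by rw [abs_of_nonneg (posPart_nonneg b)]; exact posPart_le_abs' b) hb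
  · exact dcomp_solid (by rw [abs_of_nonneg (negPart_nonneg b)]; exact negPart_le_abs' b) hb
  · rw [abs_of_nonneg (posPart_nonneg b), abs_of_nonneg (negPart_nonneg b)]
    exact posPart_inf_negPart_eq_zero b

section NoSeq

variable (hno : ¬ ∃ x : ℕ → E, (∀ n, x n ≠ 0) ∧ ∀ i j, i ≠ j → |x i| ⊓ |x j| = 0)

lemma exists_isTO
    (hno : ¬ ∃ x : ℕ → E, (∀ n, x n ≠ 0) ∧ ∀ i j, i ≠ j → |x i| ⊓ |x j| = 0)
    {d : E} (hd : d ≠ 0) : ∃ e : E, e ≠ 0 ∧ e ∈ band d ∧ IsTO e := by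
  by_contra hctr
  push_neg at hctr
  have key : ∀ e : {e : E // e ≠ 0 ∧ e ∈ band d},
      ∃ e' : {e : E // e ≠ 0 ∧ e ∈ band d}, ∃ s : E,
        s ≠ 0 ∧ (e' : E) ∈ band (e : E) ∧ s ∈ band (e : E) ∧ |(e' : E)| ⊓ |s| = 0 := by
    rintro ⟨e, he0, heb⟩
    obtain ⟨u, v, hu0, hv0, hub, hvb, huv⟩ := not_isTO (hctr e he0 heb)
    exact ⟨⟨u, hu0, band_mono heb hub⟩, v, hv0, hub, hvb, huv⟩
  choose nxt sib h1 h2 h3 h4 using key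
  set e0 : {e : E // e ≠ 0 ∧ e ∈ band d} := ⟨d, hd, mem_band_self d⟩ with he0
  set F : ℕ → {e : E // e ≠ 0 ∧ e ∈ band d} :=
    fun n => Nat.rec e0 (fun _ p => nxt p) n with hF
  have hFs : ∀ n : ℕ, F (n + 1) = nxt (F n) := fun n => rfl
  set x : ℕ → E := fun n => sib (F n) with hx
  -- chain: F m ∈ band of F k for k ≤ m
  have chain : ∀ k m : ℕ, k ≤ m → ((F m : E) ∈ band (F k : E)) := by
    intro k m hkm
    induction m with
    | zero =>
      have : k = 0 := Nat.le_zero.mp hkm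
      subst this; exact mem_band_self _
    | succ m ih =>
      rcases Nat.lt_or_ge k (m+1) with h | h
      · have hk : k ≤ m := Nat.lt_succ_iff.mp h
        have h5 : (F (m+1) : E) ∈ band (F m : E) := by rw [hFs]; exact h2 (F m)
        exact band_mono (ih hk) h5
      · have : k = m + 1 := le_antisymm hkm h
        subst this; exact mem_band_self _
  have hdisj : ∀ i j : ℕ, i < j → |x j| ⊓ |x i| = 0 := by
    intro i j hij
    -- x j ∈ band (F j) ⊆ band (F (i+1)); x i ⊥ (F (i+1))
    have hxj : x j ∈ band (F (i+1) : E) :=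
      band_mono (chain (i+1) j hij) (h3 (F j))
    have hxi : |x i| ⊓ |(F (i+1) : E)| = 0 := by
      rw [inf_comm, hFs i]
      exact h4 (F i)
    exact disj_of_mem_band hxi hxj
  refine hno ⟨x, ?_, ?_⟩
  · intro n
    rw [hx]
    exact h1 (F n)
  · intro i j hij
    rcases Nat.lt_or_ge i j with h | h
    · rw [inf_comm]; exact hdisj i j h
    · exact hdisj j i (lt_of_le_of_ne h (fun hh => hij hh.symm))

end NoSeq

/-- A "Good" family: nonzero, totally ordered bands, pairwise disjoint. -/
def Good (D : Finset E) : Prop :=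
  (∀ d ∈ D, d ≠ 0) ∧ (∀ d ∈ D, IsTO d) ∧
    (∀ d ∈ D, ∀ d' ∈ D, d ≠ d' → |d| ⊓ |d'| = 0)

lemma exists_full_family
    (hno : ¬ ∃ x : ℕ → E, (∀ n, x n ≠ 0) ∧ ∀ i j, i ≠ j → |x i| ⊓ |x j| = 0) :
    ∃ D : Finset E, Good D ∧ (∀ z : E, (∀ d ∈ D, |z| ⊓ |d| = 0) → z = 0) := by
  classical
  by_contra hctr
  push_neg at hctr
  have key : ∀ D : {D : Finset E // Good D}, ∃ z : E,
      z ≠ 0 ∧ IsTO z ∧ ∀ d ∈ (D : Finset E), |z| ⊓ |d| = 0 := by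
    rintro ⟨D, hD⟩
    obtain ⟨z, hz1, hz2⟩ := hctr D hD
    obtain ⟨z', hz'0, hz'b, hz'TO⟩ := exists_isTO hno hz2
    refine ⟨z', hz'0, hz'TO, fun d hd => ?_⟩
    have hdz : |d| ⊓ |z| = 0 := by rw [inf_comm]; exact hz1 d hd
    exact disj_of_mem_band hdz hz'b
  choose pick h1 h2 h3 using key
  have hgood_insert : ∀ D : {D : Finset E // Good D}, Good (insert (pick D) (D : Finset E)) := by
    rintro D
    obtain ⟨hD1, hD2, hD3⟩ := D.2
    refine ⟨?_, ?_, ?_⟩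
    · intro d hd
      rcases Finset.mem_insert.mp hd with h | h
      · rw [h]; exact h1 D
      · exact hD1 d h
    · intro d hd
      rcases Finset.mem_insert.mp hd with h | h
      · rw [h]; exact h2 D
      · exact hD2 d h
    · intro d hd d' hd' hdd'
      rcases Finset.mem_insert.mp hd with h | h <;>
        rcases Finset.mem_insert.mp hd' with h' | h'
      · exact absurd (h.trans h'.symm) hdd'
      · rw [h]; exact h3 D d' h'
      · rw [h', inf_comm]; exact h3 D d h
      · exact hD3 d h d' h' hdd'
  have hGood0 : Good (∅ : Finset E) := ⟨fun d hd => absurd hd (Finset.notMem_empty d),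
    fun d hd => absurd hd (Finset.notMem_empty d),
    fun d hd => absurd hd (Finset.notMem_empty d)⟩
  set F : ℕ → {D : Finset E // Good D} :=
    fun n => Nat.rec ⟨∅, hGood0⟩ (fun _ D => ⟨insert (pick D) (D : Finset E), hgood_insert D⟩) n
    with hF
  have hFs : ∀ n : ℕ, (F (n+1) : Finset E) = insert (pick (F n)) (F n : Finset E) :=
    fun n => rfl
  set x : ℕ → E := fun n => pick (F n) with hx
  have hmono : ∀ k m : ℕ, k ≤ m → (F k : Finset E) ⊆ (F m : Finset E) := by
    intro k m hkm
    induction m with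
    | zero => rw [Nat.le_zero.mp hkm]
    | succ m ih =>
      rcases Nat.lt_or_ge k (m+1) with h | h
      · refine subset_trans (ih (Nat.lt_succ_iff.mp h)) ?_
        rw [hFs]
        exact Finset.subset_insert _ _
      · rw [le_antisymm hkm h]
  have hdisj : ∀ i j : ℕ, i < j → |x j| ⊓ |x i| = 0 := by
    intro i j hij
    have hxi : x i ∈ (F j : Finset E) := by
      refine hmono (i+1) j hij ?_
      rw [hFs]
      exact Finset.mem_insert_self _ _
    exact h3 (F j) (x i) hxi
  refine hno ⟨x, fun n => h1 (F n), fun i j hij => ?_⟩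
  rcases Nat.lt_or_ge i j with h | h
  · rw [inf_comm]; exact hdisj i j h
  · exact hdisj j i (lt_of_le_of_ne h (fun hh => hij hh.symm))

end Stmt9Aux

theorem stmt9 {E : Type*} [Lattice E] [AddCommGroup E] [Module ℝ E]
    [CovariantClass E E (· + ·) (· ≤ ·)] [PosSMulMono ℝ E]
    (arch : ∀ x y : E, 0 ≤ x → 0 ≤ y → (∀ n : ℕ, n • y ≤ x) → y = 0)
    (hinf : ¬ FiniteDimensional ℝ E) :
    ∃ x : ℕ → E,
      (∀ n, x n ≠ 0) ∧
      (∀ i j, i ≠ j → |x i| ⊓ |x j| = 0) ∧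
      (Function.Injective fun n => disjComplement (disjComplement ({x n} : Set E))) ∧
      Set.Infinite {B : Set E | ∃ v : E, B = disjComplement (disjComplement ({v} : Set E))} := by
  classical
  by_cases h : ∃ x : ℕ → E, (∀ n, x n ≠ 0) ∧ ∀ i j, i ≠ j → |x i| ⊓ |x j| = 0
  · obtain ⟨x, hx0, hxd⟩ := h
    have hinj : Function.Injective
        fun n => disjComplement (disjComplement ({x n} : Set E)) := by
      intro i j hij
      by_contra hne
      have heq : Stmt9Aux.band (x i) = Stmt9Aux.band (x j) := hij
      have hmem : x i ∈ Stmt9Aux.band (x j) := heq ▸ Stmt9Aux.mem_band_self (x i)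
      have hd : |x i| ⊓ |x j| = 0 := hxd i j hne
      have : |x i| ⊓ |x i| = 0 := Stmt9Aux.disj_of_mem_band hd hmem
      rw [inf_idem] at this
      exact hx0 i (Stmt9Aux.abs_eq_zero' this)
    refine ⟨x, hx0, hxd, hinj, ?_⟩
    exact Set.infinite_of_injective_forall_mem (f := fun n : ℕ =>
      disjComplement (disjComplement ({x n} : Set E))) hinj (fun n => ⟨x n, rfl⟩)
  · exfalso
    apply hinf
    obtain ⟨D, ⟨hD1, hD2, hD3⟩, hfull⟩ := Stmt9Aux.exists_full_family h
    have hspan : Submodule.span ℝ (D : Set E) = ⊤ :=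
      eq_top_iff.mpr (fun y _ => Stmt9Aux.span_eq_top arch D hD1 hD2 hD3 hfull y)
    exact ⟨⟨D, hspan⟩⟩
end
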